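/- Let 𝔉 = 𝔉(X) be the free profinite group on a finite set X, i.e., the profinite completion of the free group F(X), with F(X) identified with its image in 𝔉. Then for any x ∈ X, the centralizer C_𝔉(x) of x in 𝔉 coincides with the closure in 𝔉 of the cyclic subgroup ⟨x⟩. -/

import Mathlib

set_option linter.unusedVariables false
set_option linter.unusedSectionVars false
set_option maxHeartbeats 1000000

namespace CSP

/-! ### The profinite completion of a discrete group -/

/-- The index set for the profinite completion: finite-index normal subgroups. -/
abbrev FinQuot (G : Type*) [Group G] : Type _ :=
  {N : Subgroup G // N.Normal ∧ N.FiniteIndex}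

variable (G : Type*) [Group G]

instance (N : FinQuot G) : (N.1).Normal := N.2.1

instance (N : FinQuot G) : TopologicalSpace (G ⧸ N.1) := ⊥

instance (N : FinQuot G) : DiscreteTopology (G ⧸ N.1) := ⟨rfl⟩

instance (N : FinQuot G) : IsTopologicalGroup (G ⧸ N.1) where
  continuous_mul := continuous_of_discreteTopology
  continuous_inv := continuous_of_discreteTopology

/-- The diagonal homomorphism from `G` into the product of all of its finite quotients. -/
def toFinQuots : G →* (∀ N : FinQuot G, G ⧸ N.1) :=
  Pi.monoidHom fun N => QuotientGroup.mk' N.1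

/-- The profinite completion of `G` as a subgroup of the product of the finite
quotients of `G`: the closure of the image of the diagonal map. -/
def profSubgroup : Subgroup (∀ N : FinQuot G, G ⧸ N.1) :=
  (toFinQuots G).range.topologicalClosure

/-- The profinite completion of a (discrete) group `G`, as a topological group.
For `G = F(X)` a free group on a finite set `X`, this is the free profinite group
`𝔉(X)` on `X`. -/
abbrev ProfComp : Type _ := ↥(profSubgroup G)

/-- The canonical homomorphism from `G` to its profinite completion.  For a free
group this is the embedding of `F(X)` into the free profinite group `𝔉(X)`. -/
def unit : G →* ProfComp G :=
  (toFinQuots G).codRestrict _ fun g =>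
    Subgroup.le_topologicalClosure _ (MonoidHom.mem_range.2 ⟨g, rfl⟩)

/-! ### Auxiliary lemmas -/

section Aux

variable {G}

/-- Coordinates of an element of the profinite completion are compatible along
inclusions of finite-index normal subgroups. -/
lemma compat (w : ProfComp G) {A B : FinQuot G} (h : A.1 ≤ B.1) :
    QuotientGroup.map A.1 B.1 (MonoidHom.id G)
        (by simpa using h)
        ((w : ∀ N : FinQuot G, G ⧸ N.1) A)
      = (w : ∀ N : FinQuot G, G ⧸ N.1) B := by
  have hw : (w : ∀ N : FinQuot G, G ⧸ N.1) ∈ closure ((toFinQuots G).range : Set _) := by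
    have hw0 : (w : ∀ N : FinQuot G, G ⧸ N.1) ∈ (toFinQuots G).range.topologicalClosure := w.2
    rwa [← SetLike.mem_coe, Subgroup.topologicalClosure_coe] at hw0
  have hsub : closure ((toFinQuots G).range : Set _) ⊆
      {p : ∀ N : FinQuot G, G ⧸ N.1 |
        QuotientGroup.map A.1 B.1 (MonoidHom.id G) (by simpa using h) (p A) = p B} := by
    apply closure_minimal
    · rintro p ⟨g, rfl⟩
      show QuotientGroup.map A.1 B.1 (MonoidHom.id G) _ (QuotientGroup.mk' A.1 g)
          = QuotientGroup.mk' B.1 g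
      rw [QuotientGroup.map_mk']
      rfl
    · exact isClosed_eq
        ((continuous_of_discreteTopology).comp (continuous_apply A))
        (continuous_apply B)
  exact hsub hw

end Aux

/-! ### The key finite-level lemma -/

section Key

variable {X : Type} [Finite X]

lemma key_lemma (x : X) (N : FinQuot (FreeGroup X)) :
    ∃ M : FinQuot (FreeGroup X), M.1 ≤ N.1 ∧
      ∀ c : FreeGroup X,
        (QuotientGroup.mk' M.1 c) * (QuotientGroup.mk' M.1 (FreeGroup.of x))
          = (QuotientGroup.mk' M.1 (FreeGroup.of x)) * (QuotientGroup.mk' M.1 c) →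
        ∃ j : ℤ, QuotientGroup.mk' N.1 c
          = (QuotientGroup.mk' N.1 (FreeGroup.of x)) ^ j := by
  classical
  set F := FreeGroup X with hF
  set π : F →* F ⧸ N.1 := QuotientGroup.mk' N.1 with hπ
  haveI : Finite (F ⧸ N.1) := by
    haveI := N.2.2
    infer_instance
  set Q := F ⧸ N.1 with hQ
  let Γ := Q → ZMod 2
  let bump : Q → Γ := fun q => Pi.single q (1 : ZMod 2)
  let κ : X → Q → Γ := fun z => if z = x then bump else 0
  have hκx : κ x = bump := if_pos rfl
  have hbump : ∀ u v : Q, bump u v = if v = u then (1 : ZMod 2) else 0 := by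
    intro u v
    exact Pi.single_apply u 1 v
  have hinv : ∀ z : X, Function.LeftInverse
      (fun p : Q × Γ => ((π (FreeGroup.of z))⁻¹ * p.1, p.2 - κ z ((π (FreeGroup.of z))⁻¹ * p.1)))
      (fun p : Q × Γ => (π (FreeGroup.of z) * p.1, p.2 + κ z p.1)) := by
    intro z p; simp
  have hrinv : ∀ z : X, Function.RightInverse
      (fun p : Q × Γ => ((π (FreeGroup.of z))⁻¹ * p.1, p.2 - κ z ((π (FreeGroup.of z))⁻¹ * p.1)))
      (fun p : Q × Γ => (π (FreeGroup.of z) * p.1, p.2 + κ z p.1)) := by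
    intro z p; simp
  let σ : X → Equiv.Perm (Q × Γ) := fun z =>
    { toFun := fun p => (π (FreeGroup.of z) * p.1, p.2 + κ z p.1)
      invFun := fun p => ((π (FreeGroup.of z))⁻¹ * p.1, p.2 - κ z ((π (FreeGroup.of z))⁻¹ * p.1))
      left_inv := hinv z
      right_inv := hrinv z }
  let Φ : F →* Equiv.Perm (Q × Γ) := FreeGroup.lift σ
  have hΦof : ∀ z : X, Φ (FreeGroup.of z) = σ z := fun z => FreeGroup.lift_apply_of
  -- structure lemma
  have struct : ∀ w : F, ∀ q : Q, ∀ a : Γ,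
      Φ w (q, a) = (π w * q, a + (Φ w (q, (0:Γ))).2) := by
    intro w
    induction w using FreeGroup.induction_on with
    | C1 =>
      intro q a
      simp
    | of z =>
      intro q a
      rw [hΦof z]
      show (π (FreeGroup.of z) * q, a + κ z q)
          = (π (FreeGroup.of z) * q, a + ((0:Γ) + κ z q))
      rw [zero_add]
    | inv_of z hz =>
      intro q a
      rw [map_inv, hΦof z]
      show ((π (FreeGroup.of z))⁻¹ * q, a - κ z ((π (FreeGroup.of z))⁻¹ * q))
          = (π (FreeGroup.of z)⁻¹ * q, a + ((0:Γ) - κ z ((π (FreeGroup.of z))⁻¹ * q)))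
      rw [zero_sub, sub_eq_add_neg, map_inv]
    | mul u v hu hv =>
      intro q a
      have eAll : ∀ b : Γ, Φ (u * v) (q, b)
          = (π u * (π v * q), (b + (Φ v (q, (0:Γ))).2) + (Φ u (π v * q, (0:Γ))).2) := by
        intro b
        rw [map_mul, Equiv.Perm.mul_apply, hv q b, hu (π v * q) (b + (Φ v (q, (0:Γ))).2)]
      have e2 : (Φ (u * v) (q, (0:Γ))).2
          = ((0:Γ) + (Φ v (q, (0:Γ))).2) + (Φ u (π v * q, (0:Γ))).2 := by
        rw [eAll (0:Γ)]
      rw [eAll a, e2, map_mul]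
      rw [Prod.mk.injEq]
      exact ⟨(mul_assoc _ _ _).symm, by rw [zero_add, add_assoc]⟩
  -- kernel of Φ is contained in N
  have hker_le : Φ.ker ≤ N.1 := by
    intro w hw
    have h1 : Φ w ((1 : Q), (0 : Γ)) = ((1 : Q), (0 : Γ)) := by
      rw [show Φ w = 1 from hw]; rfl
    have h2 := struct w 1 0
    rw [h1] at h2
    have h3 : (1 : Q) = π w * 1 := congrArg Prod.fst h2
    rw [mul_one] at h3
    exact (QuotientGroup.eq_one_iff w).mp h3.symm
  haveI hQfin : Finite (F ⧸ Φ.ker) :=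
    Finite.of_injective _ (QuotientGroup.kerLift_injective Φ)
  haveI : (Φ.ker).FiniteIndex := Subgroup.finiteIndex_of_finite_quotient (H := Φ.ker)
  refine ⟨⟨Φ.ker, Φ.normal_ker, inferInstance⟩, hker_le, ?_⟩
  intro c hc
  -- commutation of Φ c and Φ (of x)
  have hc' : QuotientGroup.mk' Φ.ker (c * FreeGroup.of x)
      = QuotientGroup.mk' Φ.ker (FreeGroup.of x * c) := by
    rw [map_mul, map_mul]; exact hc
  have hcomm : Φ c * Φ (FreeGroup.of x) = Φ (FreeGroup.of x) * Φ c := by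
    obtain ⟨n, hn, hab⟩ := (QuotientGroup.mk'_eq_mk' Φ.ker).mp hc'
    have hn1 : Φ n = 1 := hn
    have h2 := congrArg Φ hab
    rw [map_mul, hn1, mul_one, map_mul, map_mul] at h2
    exact h2
  set xb : Q := π (FreeGroup.of x) with hxb
  set cb : Q := π c with hcb
  -- pointwise relation
  have main : ∀ q : Q, bump q + (Φ c (xb * q, (0:Γ))).2
      = (Φ c (q, (0:Γ))).2 + bump (cb * q) := by
    intro q
    have happ : Φ c (Φ (FreeGroup.of x) (q, (0:Γ))) = Φ (FreeGroup.of x) (Φ c (q, (0:Γ))) := by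
      rw [← Equiv.Perm.mul_apply, ← Equiv.Perm.mul_apply, hcomm]
    have e1 : Φ (FreeGroup.of x) (q, (0:Γ)) = (xb * q, (0:Γ) + κ x q) := by
      rw [hΦof]; rfl
    have e2 : Φ c (q, (0:Γ)) = (cb * q, (0:Γ) + (Φ c (q, (0:Γ))).2) := struct c q 0
    have e3 : Φ (FreeGroup.of x) (cb * q, (0:Γ) + (Φ c (q, (0:Γ))).2)
        = (xb * (cb * q), ((0:Γ) + (Φ c (q, (0:Γ))).2) + κ x (cb * q)) := by
      rw [hΦof]; rfl
    rw [e1, e2, e3, struct c (xb * q) ((0:Γ) + κ x q)] at happ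
    have hsnd := congrArg Prod.snd happ
    simp only [zero_add] at hsnd
    rw [hκx] at hsnd
    exact hsnd
  -- telescoping sum over the orbit of 1 under xb
  set d := orderOf xb with hdd
  have hd0 : 0 < d := orderOf_pos xb
  have hxd : xb ^ d = 1 := pow_orderOf_eq_one xb
  have step : ∀ j : ℕ,
      (Φ c (xb ^ (j+1), (0:Γ))).2 - (Φ c (xb ^ j, (0:Γ))).2
        = bump (cb * xb ^ j) - bump (xb ^ j) := by
    intro j
    have h := main (xb ^ j)
    rw [← pow_succ'] at h
    linear_combination h
  have tele : ∑ j ∈ Finset.range d,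
      ((Φ c (xb ^ (j+1), (0:Γ))).2 - (Φ c (xb ^ j, (0:Γ))).2) = 0 := by
    rw [Finset.sum_range_sub (fun j => (Φ c (xb ^ j, (0:Γ))).2) d]
    rw [hxd, pow_zero, sub_self]
  have sum2 : ∑ j ∈ Finset.range d, (bump (cb * xb ^ j) - bump (xb ^ j)) = 0 := by
    rw [← Finset.sum_congr rfl (fun j _ => step j)]
    exact tele
  have sum3 : ∑ j ∈ Finset.range d, bump (cb * xb ^ j)
      = ∑ j ∈ Finset.range d, bump (xb ^ j) := by
    rw [Finset.sum_sub_distrib] at sum2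
    exact sub_eq_zero.mp sum2
  have ev := congrFun sum3 cb
  rw [Finset.sum_apply, Finset.sum_apply] at ev
  have lhs1 : ∑ j ∈ Finset.range d, (bump (cb * xb ^ j)) cb = 1 := by
    have hterm : ∀ j ∈ Finset.range d,
        (bump (cb * xb ^ j)) cb = if j = 0 then (1 : ZMod 2) else 0 := by
      intro j hj
      rw [hbump]
      by_cases h0 : j = 0
      · subst h0
        rw [pow_zero, mul_one, if_pos rfl, if_pos rfl]
      · have hne : ¬(cb = cb * xb ^ j) := by
          rw [left_eq_mul]
          intro hone
          have := orderOf_le_of_pow_eq_one (Nat.pos_of_ne_zero h0) hone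
          rw [← hdd] at this
          exact absurd (Finset.mem_range.mp hj) (not_lt.mpr this)
        rw [if_neg hne, if_neg h0]
    rw [Finset.sum_congr rfl hterm]
    rw [Finset.sum_ite_eq' (Finset.range d) 0 (fun _ => (1 : ZMod 2))]
    rw [if_pos (Finset.mem_range.mpr hd0)]
  have hex : ∃ j ∈ Finset.range d, cb = xb ^ j := by
    by_contra hno
    push_neg at hno
    have hz : ∑ j ∈ Finset.range d, (bump (xb ^ j)) cb = 0 := by
      refine Finset.sum_eq_zero ?_
      intro j hj
      rw [hbump, if_neg (hno j hj)]
    rw [lhs1, hz] at ev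
    exact one_ne_zero ev
  obtain ⟨j, hj, hcbj⟩ := hex
  refine ⟨(j : ℤ), ?_⟩
  rw [zpow_natCast]
  exact hcbj

end Key

/-! ### The main theorem -/

/-- Corollary 2.3 (first part): in the free profinite group `𝔉(X)` on a finite set
`X`, the centralizer of a free generator `x ∈ X` is the closure of the (pro)cyclic
subgroup `⟨x⟩`. -/
theorem centralizer_of_generator (X : Type) [Finite X] (x : X) :
    Subgroup.centralizer {unit (FreeGroup X) (FreeGroup.of x)}
      = (Subgroup.zpowers (unit (FreeGroup X) (FreeGroup.of x))).topologicalClosure := by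
  classical
  set F := FreeGroup X with hF
  set u : ProfComp F := unit F (FreeGroup.of x) with hu
  apply le_antisymm
  · -- hard direction: centralizer ≤ closure of zpowers
    intro w hw
    -- every coordinate of w is a power of the corresponding image of x
    have coords : ∀ N : FinQuot F, ∃ j : ℤ,
        (w : ∀ N : FinQuot F, F ⧸ N.1) N
          = (QuotientGroup.mk' N.1 (FreeGroup.of x)) ^ j := by
      intro N
      obtain ⟨M, hMN, hM⟩ := key_lemma x N
      obtain ⟨c, hc⟩ := QuotientGroup.mk'_surjective M.1 ((w : ∀ N : FinQuot F, F ⧸ N.1) M)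
      have hcomm0 : u * w = w * u :=
        (Subgroup.mem_centralizer_iff.mp hw) u (Set.mem_singleton u)
      have h1 : ((u : ProfComp F) : ∀ N : FinQuot F, F ⧸ N.1)
            * ((w : ProfComp F) : ∀ N : FinQuot F, F ⧸ N.1)
          = ((w : ProfComp F) : ∀ N : FinQuot F, F ⧸ N.1)
            * ((u : ProfComp F) : ∀ N : FinQuot F, F ⧸ N.1) := by
        exact_mod_cast congrArg Subtype.val hcomm0
      have h2 := congrFun h1 M
      rw [Pi.mul_apply, Pi.mul_apply, ← hc] at h2
      have h3 : QuotientGroup.mk' M.1 (FreeGroup.of x) * QuotientGroup.mk' M.1 c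
          = QuotientGroup.mk' M.1 c * QuotientGroup.mk' M.1 (FreeGroup.of x) := h2
      obtain ⟨j, hj⟩ := hM c h3.symm
      have h4 : (w : ∀ N : FinQuot F, F ⧸ N.1) N = QuotientGroup.mk' N.1 c := by
        have h5 := compat w hMN
        rw [← hc, QuotientGroup.map_mk'] at h5
        exact h5.symm
      exact ⟨j, by rw [h4]; exact hj⟩
    -- conclude that w is in the closure of the powers of u
    show w ∈ (Subgroup.zpowers u).topologicalClosure
    rw [← SetLike.mem_coe, Subgroup.topologicalClosure_coe, closure_subtype, mem_closure_iff]
    intro o ho hwo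
    obtain ⟨I, uo, huo, hsub⟩ := isOpen_pi_iff.mp ho _ hwo
    -- intersect the finitely many indices
    let K : Subgroup F := ⨅ i : I, ((i : FinQuot F)).1
    haveI hKn : K.Normal := by
      constructor
      intro n hn g
      rw [Subgroup.mem_iInf] at hn ⊢
      intro i
      exact ((i : FinQuot F)).2.1.conj_mem n (hn i) g
    haveI hKf : K.FiniteIndex := by
      haveI : ∀ i : I, (((i : FinQuot F)).1).FiniteIndex := fun i => ((i : FinQuot F)).2.2
      exact Subgroup.finiteIndex_iInf this
    have hKle : ∀ i ∈ I, K ≤ i.1 := by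
      intro i hi
      exact iInf_le (fun i : I => ((i : FinQuot F)).1) ⟨i, hi⟩
    obtain ⟨j, hj⟩ := coords ⟨K, hKn, hKf⟩
    refine ⟨((u ^ j : ProfComp F) : ∀ N : FinQuot F, F ⧸ N.1), ?_, ?_⟩
    · -- lies in the box defining o
      apply hsub
      rw [Set.mem_pi]
      intro i hi
      have hwi : (w : ∀ N : FinQuot F, F ⧸ N.1) i
          = (QuotientGroup.mk' i.1 (FreeGroup.of x)) ^ j := by
        have h5 := compat w (A := ⟨K, hKn, hKf⟩) (B := i) (hKle i hi)
        rw [hj, map_zpow, QuotientGroup.map_mk'] at h5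
        exact h5.symm
      have hui : ((u ^ j : ProfComp F) : ∀ N : FinQuot F, F ⧸ N.1) i
          = (QuotientGroup.mk' i.1 (FreeGroup.of x)) ^ j := by
        rw [SubgroupClass.coe_zpow]
        rfl
      rw [hui, ← hwi]
      exact (huo i hi).2
    · exact ⟨u ^ j, Subgroup.zpow_mem _ (Subgroup.mem_zpowers u) j, rfl⟩
  · -- easy direction: the closure of ⟨x⟩ is contained in the (closed) centralizer
    apply Subgroup.topologicalClosure_minimal
    · rw [Subgroup.zpowers_le]
      refine Subgroup.mem_centralizer_iff.mpr ?_
      intro y hy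
      rw [Set.mem_singleton_iff] at hy
      subst hy
      rfl
    · have hset : (Subgroup.centralizer {u} : Set (ProfComp F)) = {z | u * z = z * u} := by
        ext z
        simp [Subgroup.mem_centralizer_iff]
      rw [hset]
      exact isClosed_eq (continuous_const.mul continuous_id) (continuous_id.mul continuous_const)

end CSP
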